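/- A causal-net is connected if and only if it can be transformed into a point by a finite (possibly empty) sequence of simple contractions, i.e. there exist causal-nets G = G₀, G₁, …, Gₙ with Gₙ a point and simple contractions λᵢ : G_{i-1} → Gᵢ for 1 ≤ i ≤ n. -/

import Mathlib

open CategoryTheory

namespace CausalNets

/-- Acyclicity condition for raw directed-multigraph data: every directed cycle
has length zero. -/
def NoCycleData (V E : Type) (s t : E → V) : Prop :=
  letI : Quiver V := ⟨fun a b => { e : E // s e = a ∧ t e = b }⟩
  ∀ (v : V) (p : Quiver.Path v v), p.length = 0

/-- A causal-net: a finite acyclic directed multigraph (isolated vertices and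
parallel edges allowed). -/
structure CausalNet where
  V : Type
  E : Type
  src : E → V
  tgt : E → V
  fintypeV : Fintype V
  fintypeE : Fintype E
  acyclic : NoCycleData V E src tgt

attribute [instance] CausalNet.fintypeV CausalNet.fintypeE

instance CausalNet.quiver (G : CausalNet) : Quiver G.V :=
  ⟨fun a b => { e : G.E // G.src e = a ∧ G.tgt e = b }⟩

/-- The category `Cau` of causal-nets: a morphism `G ⟶ H` is a functor between
the path categories `Paths G.V ⥤ Paths H.V`. -/
instance : Category CausalNet where
  Hom G H := Paths G.V ⥤ Paths H.V
  id G := 𝟭 (Paths G.V)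
  comp φ ψ := φ ⋙ ψ

variable {G H K : CausalNet}

/-- The action of a morphism of causal-nets on vertices (objects). -/
def vmap (φ : G ⟶ H) : G.V → H.V := (φ : Paths G.V ⥤ Paths H.V).obj

/-- The action of a morphism of causal-nets on directed paths (morphisms). -/
def pmap (φ : G ⟶ H) {a b : G.V} (p : Quiver.Path a b) :
    Quiver.Path (vmap φ a) (vmap φ b) :=
  (φ : Paths G.V ⥤ Paths H.V).map p

/-- The quiver arrow corresponding to an edge. -/
def edgeHom (G : CausalNet) (e : G.E) : G.src e ⟶ G.tgt e := ⟨e, rfl, rfl⟩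

/-- The directed path which is the image of the edge `e` under the morphism `φ`. -/
def edgePath (φ : G ⟶ H) (e : G.E) :
    Quiver.Path (vmap φ (G.src e)) (vmap φ (G.tgt e)) :=
  pmap φ (Quiver.Hom.toPath (edgeHom G e))

/-- The underlying edge of a quiver arrow. -/
def homEdge {a b : G.V} (f : a ⟶ b) : G.E := Subtype.val f

/-- The list of edges traversed by a directed path. -/
def pathEdges : {a b : G.V} → Quiver.Path a b → List G.E
  | _, _, Quiver.Path.nil => []
  | _, _, Quiver.Path.cons p f => pathEdges p ++ [homEdge f]

/-- The list of vertices visited by a directed path (including endpoints). -/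
def pathVertices : {a b : G.V} → Quiver.Path a b → List G.V
  | a, _, Quiver.Path.nil => [a]
  | _, b, Quiver.Path.cons p _ => pathVertices p ++ [b]

/-- An edge `e` is a contraction of `φ` if `φ(e)` has length `0`. -/
def IsContractionEdge (φ : G ⟶ H) (e : G.E) : Prop := (edgePath φ e).length = 0

/-- An edge `e` is a segment of `φ` if `φ(e)` has length `1`. -/
def IsSegmentEdge (φ : G ⟶ H) (e : G.E) : Prop := (edgePath φ e).length = 1

/-- An edge `e` is a subdivision of `φ` if `φ(e)` has length at least `2`. -/
def IsSubdivisionEdge (φ : G ⟶ H) (e : G.E) : Prop := 2 ≤ (edgePath φ e).length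

/-- `φ` maps the edge `e` to the length-one path consisting of the edge `h`. -/
def MapsToEdge (φ : G ⟶ H) (e : G.E) (h : H.E) : Prop :=
  pathEdges (edgePath φ e) = [h]

/-- A quotient: a morphism with no null-vertex and no null-edge. -/
def IsQuotientMor (φ : G ⟶ H) : Prop :=
  (∀ v : H.V, ∃ w : G.V, vmap φ w = v) ∧ ∀ h : H.E, ∃ e : G.E, MapsToEdge φ e h

/-- A coarse-graining: a quotient with no subdivision. -/
def IsCoarseGraining (φ : G ⟶ H) : Prop :=
  IsQuotientMor φ ∧ ∀ e : G.E, ¬ IsSubdivisionEdge φ e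

/-- A vertex-coarse-graining: a coarse-graining with no multiple-edge. -/
def IsVertexCoarseGraining (φ : G ⟶ H) : Prop :=
  IsCoarseGraining φ ∧
  ∀ (h : H.E) (e₁ e₂ : G.E), MapsToEdge φ e₁ h → MapsToEdge φ e₂ h → e₁ = e₂

/-- An edge-coarse-graining: a coarse-graining with no multiple-vertex and no
contraction. -/
def IsEdgeCoarseGraining (φ : G ⟶ H) : Prop :=
  IsCoarseGraining φ ∧ Function.Injective (vmap φ) ∧ ∀ e : G.E, ¬ IsContractionEdge φ e

/-- A merging: a vertex-coarse-graining with no contraction. -/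
def IsMerging (φ : G ⟶ H) : Prop :=
  IsVertexCoarseGraining φ ∧ ∀ e : G.E, ¬ IsContractionEdge φ e

/-- A fusion: a coarse-graining with no contraction. -/
def IsFusion (φ : G ⟶ H) : Prop :=
  IsCoarseGraining φ ∧ ∀ e : G.E, ¬ IsContractionEdge φ e

/-- An inclusion: a morphism injective on vertices and on directed paths
(an injective-on-objects faithful functor). -/
def IsInclusion (φ : G ⟶ H) : Prop :=
  Function.Injective (vmap φ) ∧
  ∀ (a b : G.V) (p q : Quiver.Path a b), pmap φ p = pmap φ q → p = q

/-- An embedding: an inclusion with no subdivision. -/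
def IsEmbedding (φ : G ⟶ H) : Prop :=
  IsInclusion φ ∧ ∀ e : G.E, ¬ IsSubdivisionEdge φ e

/-- An immersion: an inclusion such that images of distinct subdivision edges
share no edge. -/
def IsImmersion (φ : G ⟶ H) : Prop :=
  IsInclusion φ ∧
  ∀ e₁ e₂ : G.E, e₁ ≠ e₂ → IsSubdivisionEdge φ e₁ → IsSubdivisionEdge φ e₂ →
    ∀ h : H.E, h ∈ pathEdges (edgePath φ e₁) → h ∉ pathEdges (edgePath φ e₂)

/-- The internal vertices of a directed path (all visited vertices except the
two endpoints). -/
def internalVertices {a b : G.V} (p : Quiver.Path a b) : List G.V :=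
  ((pathVertices p).dropLast).tail

/-- A strong morphism: all internal vertices of images of subdivision edges are
null-vertices. -/
def IsStrong (φ : G ⟶ H) : Prop :=
  ∀ e : G.E, IsSubdivisionEdge φ e →
    ∀ v ∈ internalVertices (edgePath φ e), ∀ w : G.V, vmap φ w ≠ v

/-- A vertex-disjoint morphism: images of distinct subdivision edges share no
internal vertex. -/
def IsVertexDisjoint (φ : G ⟶ H) : Prop :=
  ∀ e₁ e₂ : G.E, e₁ ≠ e₂ → IsSubdivisionEdge φ e₁ → IsSubdivisionEdge φ e₂ →
    ∀ v : H.V, v ∈ internalVertices (edgePath φ e₁) → v ∉ internalVertices (edgePath φ e₂)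

/-- A topological embedding: a strong vertex-disjoint inclusion. -/
def IsTopologicalEmbedding (φ : G ⟶ H) : Prop :=
  IsInclusion φ ∧ IsStrong φ ∧ IsVertexDisjoint φ

/-- The edge `e` covers the vertex `v` if `v` occurs on the path `φ(e)`. -/
def Covers (φ : G ⟶ H) (e : G.E) (v : H.V) : Prop :=
  v ∈ pathVertices (edgePath φ e)

/-- An isolated vertex: a vertex incident to no edge. -/
def IsolatedVertex (G : CausalNet) (v : G.V) : Prop :=
  ∀ e : G.E, G.src e ≠ v ∧ G.tgt e ≠ v

/-- A subdivision morphism: a topological embedding such that every non-isolated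
vertex of the codomain is covered and every isolated vertex of the codomain is a
simple-vertex. -/
def IsSubdivisionMor (φ : G ⟶ H) : Prop :=
  IsTopologicalEmbedding φ ∧
  (∀ v : H.V, ¬ IsolatedVertex H v → ∃ e : G.E, Covers φ e v) ∧
  (∀ v : H.V, IsolatedVertex H v → ∃! w : G.V, vmap φ w = v)

theorem mapPath_length {V W : Type} [Quiver V] [Quiver W] (F : V ⥤q W) :
    ∀ {a b : V} (p : Quiver.Path a b), (F.mapPath p).length = p.length := by
  intro a b p
  induction p with
  | nil => rfl
  | cons q f ih =>
      show ((F.mapPath q).cons (F.map f)).length = (q.cons f).length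
      rw [Quiver.Path.length_cons, Quiver.Path.length_cons, ih]

theorem noCycleData_of_map {V₁ E₁ : Type} (s₁ t₁ : E₁ → V₁) (G : CausalNet)
    (f : V₁ → G.V) (g : E₁ → G.E)
    (hs : ∀ e, G.src (g e) = f (s₁ e)) (ht : ∀ e, G.tgt (g e) = f (t₁ e)) :
    NoCycleData V₁ E₁ s₁ t₁ := by
  letI : Quiver V₁ := ⟨fun a b => { e : E₁ // s₁ e = a ∧ t₁ e = b }⟩
  intro v p
  let F : V₁ ⥤q G.V :=
    { obj := f
      map := fun {a b} e =>
        ⟨g (Subtype.val e), by rw [hs, (Subtype.prop e).1], by rw [ht, (Subtype.prop e).2]⟩ }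
  have h := G.acyclic (f v) (F.mapPath p)
  rw [mapPath_length] at h
  exact h

theorem noCycleData_of_lt {V E : Type} [Preorder V] (s t : E → V)
    (hlt : ∀ e, s e < t e) : NoCycleData V E s t := by
  letI : Quiver V := ⟨fun a b => { e : E // s e = a ∧ t e = b }⟩
  have key : ∀ {a b : V} (p : Quiver.Path a b), (a = b ∧ p.length = 0) ∨ a < b := by
    intro a b p
    induction p with
    | nil => exact Or.inl ⟨rfl, rfl⟩
    | cons q f ih =>
        have hcb := hlt (Subtype.val f)
        rw [(Subtype.prop f).1, (Subtype.prop f).2] at hcb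
        rcases ih with ⟨h, _⟩ | h
        · exact Or.inr (by rw [h]; exact hcb)
        · exact Or.inr (lt_trans h hcb)
  intro v p
  rcases key p with ⟨_, h⟩ | h
  · exact h
  · exact absurd h (lt_irrefl v)

/-- The sub-causal-net spanned by a set of vertices and a set of edges. -/
noncomputable def mkSub (G : CausalNet) (Vs : Set G.V) (Es : Set G.E)
    (hs : ∀ e ∈ Es, G.src e ∈ Vs) (ht : ∀ e ∈ Es, G.tgt e ∈ Vs) : CausalNet where
  V := Vs
  E := Es
  src e := ⟨G.src e.1, hs e.1 e.2⟩
  tgt e := ⟨G.tgt e.1, ht e.1 e.2⟩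
  fintypeV := Fintype.ofFinite _
  fintypeE := Fintype.ofFinite _
  acyclic := noCycleData_of_map _ _ G Subtype.val Subtype.val (fun _ => rfl) (fun _ => rfl)

/-- The fiber of a morphism at a vertex `v` of the codomain: the sub-causal-net
of the domain on the vertices mapped to `v` and the edges mapped to the identity
path at `v`. -/
noncomputable def fiber (φ : G ⟶ H) (v : H.V) : CausalNet :=
  mkSub G {w : G.V | vmap φ w = v}
    {e : G.E | IsContractionEdge φ e ∧ vmap φ (G.src e) = v}
    (fun _ he => he.2)
    (fun e he =>
      show vmap φ (G.tgt e) = v from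
        Quiver.Path.eq_of_length_zero (edgePath φ e) he.1 ▸ he.2)

/-- The underlying undirected (simple) graph of a causal-net. -/
def undirected (G : CausalNet) : SimpleGraph G.V where
  Adj v w := v ≠ w ∧ ∃ e : G.E, (G.src e = v ∧ G.tgt e = w) ∨ (G.src e = w ∧ G.tgt e = v)
  symm := by
    refine ⟨?_⟩
    rintro v w ⟨hne, e, he⟩
    exact ⟨hne.symm, e, he.symm⟩
  loopless := by
    refine ⟨?_⟩
    intro v h
    exact h.1 rfl

/-- A causal-net is connected if its underlying undirected graph is connected. -/
def Connected (G : CausalNet) : Prop := (undirected G).Connected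

/-- A causal-Tree: a causal-net whose simplification has a tree as underlying
undirected graph.  (Since a causal-net is acyclic, the underlying undirected
graph of its simplification is exactly `undirected G`.) -/
def IsCausalTree (G : CausalNet) : Prop := (undirected G).IsTree

/-- A contraction: a vertex-coarse-graining all of whose fibers are connected. -/
def IsContractionMor (φ : G ⟶ H) : Prop :=
  IsVertexCoarseGraining φ ∧ ∀ v : H.V, Connected (fiber φ v)

/-- A simple contraction: a contraction with exactly one non-trivial fiber, that
fiber consisting of two vertices together with all edges from the first to the
second. -/
def IsSimpleContraction (φ : G ⟶ H) : Prop :=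
  IsContractionMor φ ∧
  ∃ w₁ w₂ : G.V, w₁ ≠ w₂ ∧ vmap φ w₁ = vmap φ w₂ ∧
    (∃ e : G.E, G.src e = w₁ ∧ G.tgt e = w₂) ∧
    (∀ e : G.E, IsContractionEdge φ e ↔ (G.src e = w₁ ∧ G.tgt e = w₂)) ∧
    (∀ u u' : G.V, vmap φ u = vmap φ u' →
      u = u' ∨ ((u = w₁ ∨ u = w₂) ∧ (u' = w₁ ∨ u' = w₂)))

/-- A tree-contraction: a contraction all of whose fibers are causal-Trees. -/
def IsTreeContraction (φ : G ⟶ H) : Prop :=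
  IsContractionMor φ ∧ ∀ v : H.V, IsCausalTree (fiber φ v)

/-- A directed multi-path: a causal-net whose simplification is a directed path. -/
def IsDirectedMultiPath (K : CausalNet) : Prop :=
  ∃ (a b : K.V) (p : Quiver.Path a b),
    (pathVertices p).Nodup ∧ (∀ v : K.V, v ∈ pathVertices p) ∧
    ∀ e : K.E, ∃ h ∈ pathEdges p, K.src e = K.src h ∧ K.tgt e = K.tgt h

/-- A path-contraction: a vertex-coarse-graining all of whose fibers are
directed multi-paths. -/
def IsPathContraction (φ : G ⟶ H) : Prop :=
  IsVertexCoarseGraining φ ∧ ∀ v : H.V, IsDirectedMultiPath (fiber φ v)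

/-- A point: a causal-net with exactly one vertex and no edges. -/
def IsPoint (A : CausalNet) : Prop := (∃ v : A.V, ∀ w : A.V, w = v) ∧ IsEmpty A.E

/-- Reachability: there is a directed path from `a` to `b`. -/
def Reaches (G : CausalNet) (a b : G.V) : Prop := Nonempty (Quiver.Path a b)

/-- A coclique: a set of vertices no two distinct members of which are
comparable under the reachability order. -/
def IsCoclique (G : CausalNet) (S : Set G.V) : Prop :=
  ∀ a ∈ S, ∀ b ∈ S, a ≠ b → ¬ Reaches G a b

/-- A multi-edge: the nonempty set of all edges from one fixed vertex to another. -/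
def IsMultiEdge (G : CausalNet) (s : Set G.E) : Prop :=
  s.Nonempty ∧ ∃ a b : G.V, s = {e : G.E | G.src e = a ∧ G.tgt e = b}

/-- The pair of vertices whose multi-edge is contracted by a simple contraction. -/
def ContractedPair (φ : G ⟶ H) (w₁ w₂ : G.V) : Prop :=
  w₁ ≠ w₂ ∧ vmap φ w₁ = vmap φ w₂ ∧ (∃ e : G.E, G.src e = w₁ ∧ G.tgt e = w₂) ∧
  ∀ e : G.E, IsContractionEdge φ e ↔ (G.src e = w₁ ∧ G.tgt e = w₂)

/-- Two causal-nets are isomorphic in `Cau`. -/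
def IsIsomorphicTo (A B : CausalNet) : Prop := ∃ φ : A ⟶ B, IsIso φ

/-- A simple causal-net: at most one edge between any ordered pair of vertices. -/
def IsSimpleNet (G : CausalNet) : Prop :=
  ∀ e₁ e₂ : G.E, G.src e₁ = G.src e₂ → G.tgt e₁ = G.tgt e₂ → e₁ = e₂

/-- A harmonic causal-net: every fusion out of it is an isomorphism. -/
def Harmonic (G : CausalNet) : Prop :=
  ∀ (H : CausalNet) (φ : G ⟶ H), IsFusion φ → IsIso φ

/-- A hamiltonian path: a directed path visiting every vertex exactly once. -/
def HasHamiltonianPath (G : CausalNet) : Prop :=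
  ∃ (a b : G.V) (p : Quiver.Path a b),
    (pathVertices p).Nodup ∧ ∀ v : G.V, v ∈ pathVertices p

/-- Morphisms which can be written as a composition of finitely many morphisms
each satisfying `P`. -/
inductive IsCompOf (P : ∀ ⦃A B : CausalNet⦄, (A ⟶ B) → Prop) :
    ∀ {A B : CausalNet}, (A ⟶ B) → Prop
  | of {A B : CausalNet} (φ : A ⟶ B) : P φ → IsCompOf P φ
  | comp {A B C : CausalNet} (φ : A ⟶ B) (ψ : B ⟶ C) :
      IsCompOf P φ → IsCompOf P ψ → IsCompOf P (φ ≫ ψ)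

def SimpleContractionStep (A B : CausalNet) : Prop := ∃ φ : A ⟶ B, IsSimpleContraction φ

/-! ### Auxiliary material for the proof -/

section Aux

theorem acyclic' (G : CausalNet) (v : G.V) (p : Quiver.Path v v) : p.length = 0 :=
  G.acyclic v p

/-- Existence of a directed path of a given length. -/
def GPath (G : CausalNet) (x y : G.V) (n : ℕ) : Prop :=
  ∃ p : Quiver.Path x y, p.length = n

theorem gpath_refl (G : CausalNet) (x : G.V) : GPath G x x 0 := ⟨.nil, rfl⟩

theorem gpath_edge {G : CausalNet} {x y : G.V} (e : G.E)
    (h1 : G.src e = x) (h2 : G.tgt e = y) : GPath G x y 1 :=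
  ⟨Quiver.Hom.toPath ⟨e, h1, h2⟩, rfl⟩

theorem gpath_comp {G : CausalNet} {x y z : G.V} {m n : ℕ}
    (h1 : GPath G x y m) (h2 : GPath G y z n) : GPath G x z (m + n) := by
  obtain ⟨p, hp⟩ := h1
  obtain ⟨q, hq⟩ := h2
  exact ⟨p.comp q, by rw [Quiver.Path.length_comp, hp, hq]⟩

theorem gpath_acyclic {G : CausalNet} {x : G.V} {n : ℕ} (h : GPath G x x n) : n = 0 := by
  obtain ⟨p, hp⟩ := h
  rw [← hp]; exact acyclic' G x p

theorem gpath_zero {G : CausalNet} {x y : G.V} (h : GPath G x y 0) : x = y := by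
  obtain ⟨p, hp⟩ := h
  exact Quiver.Path.eq_of_length_zero p hp

theorem edge_ne {G : CausalNet} (e : G.E) : G.src e ≠ G.tgt e := by
  intro h
  have := gpath_acyclic (gpath_edge e rfl h.symm)
  omega

theorem pathEdges_length {G : CausalNet} {a b : G.V} (p : Quiver.Path a b) :
    (pathEdges p).length = p.length := by
  induction p with
  | nil => simp [pathEdges]
  | cons q f ih => simp [pathEdges, ih]

theorem pathEdges_singleton {G : CausalNet} {a b : G.V} {p : Quiver.Path a b} {h : G.E}
    (hp : pathEdges p = [h]) : G.src h = a ∧ G.tgt h = b := by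
  cases p with
  | nil => exact absurd hp (by simp [pathEdges])
  | @cons c d q f =>
      have hlen := congrArg List.length hp
      rw [pathEdges, List.length_append] at hlen
      simp only [List.length_singleton, List.length_cons] at hlen
      have hq0 : pathEdges q = [] := List.length_eq_zero_iff.mp (by omega)
      have hq : q.length = 0 := by rw [← pathEdges_length, hq0]; rfl
      have hac : a = c := Quiver.Path.eq_of_length_zero q hq
      rw [pathEdges, hq0, List.nil_append] at hp
      have hf : homEdge f = h := by simpa using hp
      subst hac
      obtain ⟨e, he1, he2⟩ := f
      rw [← hf]
      exact ⟨he1, he2⟩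

theorem mapsToEdge_endpoints {G H : CausalNet} {φ : G ⟶ H} {e : G.E} {h : H.E}
    (hm : MapsToEdge φ e h) :
    H.src h = vmap φ (G.src e) ∧ H.tgt h = vmap φ (G.tgt e) :=
  pathEdges_singleton hm

end Aux

section Contract

variable (G : CausalNet) (w₁ w₂ : G.V)

/-- The multi-edge being contracted. -/
def Removed (e : G.E) : Prop := G.src e = w₁ ∧ G.tgt e = w₂

/-- Vertices of the contracted net. -/
abbrev cV : Type := {v : G.V // v ≠ w₂}

/-- Edges of the contracted net. -/
abbrev cE : Type := {e : G.E // ¬ Removed G w₁ w₂ e}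

variable {G w₁ w₂}

/-- Projection of vertices. -/
noncomputable def cproj (hne : w₁ ≠ w₂) (v : G.V) : cV G w₂ :=
  letI := Classical.dec (v = w₂)
  if h : v = w₂ then ⟨w₁, hne⟩ else ⟨v, h⟩

variable (hne : w₁ ≠ w₂)

theorem cproj_of_ne {v : G.V} (h : v ≠ w₂) : cproj hne v = ⟨v, h⟩ := by
  unfold cproj; rw [dif_neg h]

theorem cproj_w₂ : cproj hne w₂ = ⟨w₁, hne⟩ := by
  unfold cproj; rw [dif_pos rfl]

theorem cproj_eta (v : cV G w₂) : cproj hne v.val = v := by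
  rw [cproj_of_ne hne v.prop]

/-- Possible lifts of a contracted vertex. -/
def inLifts (w₁ : G.V) (a : cV G w₂) (x : G.V) : Prop := x = a.val ∨ (a.val = w₁ ∧ x = w₂)

theorem inLifts_cproj (v : G.V) : inLifts w₁ (cproj hne v) v := by
  by_cases h : v = w₂
  · subst h
    exact Or.inr ⟨by rw [cproj_w₂], rfl⟩
  · exact Or.inl (by rw [cproj_of_ne hne h])

variable (hedge : ∃ e : G.E, G.src e = w₁ ∧ G.tgt e = w₂)
variable (hshort : ∀ m : ℕ, GPath G w₁ w₂ m → m ≤ 1)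

include hne hedge hshort in
theorem contract_acyclic :
    NoCycleData (cV G w₂) (cE G w₁ w₂)
      (fun e => cproj hne (G.src e.1)) (fun e => cproj hne (G.tgt e.1)) := by
  obtain ⟨e₀, he₀1, he₀2⟩ := hedge
  have hedge' : GPath G w₁ w₂ 1 := gpath_edge e₀ he₀1 he₀2
  letI : Quiver (cV G w₂) :=
    ⟨fun a b => { e : cE G w₁ w₂ //
        cproj hne (G.src e.1) = a ∧ cproj hne (G.tgt e.1) = b }⟩
  have key : ∀ {a b : cV G w₂} (p : Quiver.Path a b), 1 ≤ p.length →
      (∃ a' b' n, inLifts w₁ a a' ∧ inLifts w₁ b b' ∧ GPath G a' b' n ∧ 1 ≤ n ∧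
        ¬(a' = w₁ ∧ b' = w₂ ∧ n = 1)) ∨
      (∃ a' m n, inLifts w₁ a a' ∧ GPath G a' w₂ m ∧ GPath G w₁ b.val n ∧ 1 ≤ m ∧
        (a' = w₁ → 2 ≤ m)) := by
    intro a b p
    induction p with
    | nil => intro h; exact absurd h (by simp)
    | @cons c d q f ih =>
      intro _
      obtain ⟨⟨e, hrem⟩, hsc, htc⟩ := f
      have hls : inLifts w₁ c (G.src e) := hsc ▸ inLifts_cproj hne (G.src e)
      have hld : inLifts w₁ d (G.tgt e) := htc ▸ inLifts_cproj hne (G.tgt e)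
      by_cases hq : q.length = 0
      · -- base case: single edge
        have hac : a = c := Quiver.Path.eq_of_length_zero q hq
        left
        refine ⟨G.src e, G.tgt e, 1, by rw [hac]; exact hls, hld,
          gpath_edge e rfl rfl, le_refl _, ?_⟩
        rintro ⟨h1, h2, -⟩
        exact hrem ⟨h1, h2⟩
      · have hq1 : 1 ≤ q.length := Nat.one_le_iff_ne_zero.mpr hq
        rcases ih hq1 with ⟨a', b', n, ha, hc, hpath, hn, hcon⟩ |
          ⟨a', m, n, ha, hp1, hp2, hm, hma⟩
        · -- previously in state A
          rcases hc with hc | ⟨hcw, hc⟩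
          · -- b' = c.val
            rcases hls with hs | ⟨hcw, hs⟩
            · -- src e = c.val : extend
              left
              refine ⟨a', G.tgt e, n + 1, ha, hld,
                gpath_comp hpath (gpath_edge e (by rw [hs, hc]) rfl), by omega, ?_⟩
              rintro ⟨-, -, h⟩; omega
            · -- c.val = w₁, src e = w₂ : insert the edge e₀
              left
              have h1 : GPath G b' w₂ 1 := by rw [hc, hcw]; exact hedge'
              refine ⟨a', G.tgt e, n + 1 + 1, ha, hld,
                gpath_comp (gpath_comp hpath h1) (gpath_edge e hs rfl), by omega, ?_⟩
              rintro ⟨-, -, h⟩; omega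
          · -- c.val = w₁, b' = w₂
            rcases hls with hs | ⟨-, hs⟩
            · -- src e = c.val = w₁ : teleport
              right
              have hp1' : GPath G a' w₂ n := by rw [← hc]; exact hpath
              have hsw : G.src e = w₁ := by rw [hs, hcw]
              rcases hld with hd | ⟨hdw, hd⟩
              · exact ⟨a', n, 1, ha, hp1', gpath_edge e hsw hd, hn, fun h => by
                  rcases Nat.lt_or_ge n 2 with h2 | h2
                  · exact absurd ⟨h, hc, by omega⟩ hcon
                  · exact h2⟩
              · exact absurd ⟨hsw, hd⟩ hrem
            · -- src e = w₂ = b' : extend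
              left
              refine ⟨a', G.tgt e, n + 1, ha, hld,
                gpath_comp hpath (gpath_edge e (by rw [hs, hc]) rfl), by omega, ?_⟩
              rintro ⟨-, -, h⟩; omega
        · -- previously in state C
          rcases hls with hs | ⟨hcw, hs⟩
          · -- src e = c.val : extend second path
            have hext : GPath G w₁ (G.tgt e) (n + 1) :=
              gpath_comp hp2 (gpath_edge e (by rw [hs]) rfl)
            rcases hld with hd | ⟨hdw, hd⟩
            · right
              exact ⟨a', m, n + 1, ha, hp1, by rw [← hd]; exact hext, hm, hma⟩
            · -- tgt e = w₂ : contradiction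
              rw [hd] at hext
              have := hshort (n + 1) hext
              have hn0 : n = 0 := by omega
              rw [hn0] at hp2
              have : c.val = w₁ := (gpath_zero hp2).symm
              exact absurd ⟨by rw [hs, this], hd⟩ hrem
          · -- c.val = w₁, src e = w₂
            have hp2' : GPath G w₁ w₁ n := by rw [hcw] at hp2; exact hp2
            have hn0 : n = 0 := gpath_acyclic hp2'
            have hnew : GPath G a' (G.tgt e) (m + 1) :=
              gpath_comp hp1 (gpath_edge e hs rfl)
            left
            refine ⟨a', G.tgt e, m + 1, ha, hld, hnew, by omega, ?_⟩
            rintro ⟨-, -, h⟩; omega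
  intro v p
  by_contra hlen
  have h1 : 1 ≤ p.length := Nat.one_le_iff_ne_zero.mpr hlen
  rcases key p h1 with ⟨a', b', n, ha, hb, hpath, hn, hcon⟩ |
    ⟨a', m, n, ha, hp1, hp2, hm, hma⟩
  · rcases ha with ha | ⟨hvw, ha⟩
    · rcases hb with hb | ⟨hvw, hb⟩
      · have hpath' : GPath G v.val v.val n := by rw [ha] at hpath; rw [hb] at hpath; exact hpath
        have := gpath_acyclic hpath'; omega
      · have hpath' : GPath G w₁ w₂ n := by rw [ha, hvw, hb] at hpath; exact hpath
        have := hshort n hpath'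
        exact hcon ⟨by rw [ha, hvw], hb, by omega⟩
    · rcases hb with hb | ⟨-, hb⟩
      · have hpath' : GPath G w₂ w₁ n := by rw [ha, hb, hvw] at hpath; exact hpath
        have := gpath_acyclic (gpath_comp (gpath_edge e₀ he₀1 he₀2) hpath')
        omega
      · have hpath' : GPath G w₂ w₂ n := by rw [ha, hb] at hpath; exact hpath
        have := gpath_acyclic hpath'; omega
  · rcases ha with ha | ⟨hvw, ha⟩
    · have hp1' : GPath G v.val w₂ m := by rw [← ha]; exact hp1
      have hcomb : GPath G w₁ w₂ (n + m) := gpath_comp hp2 hp1'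
      have := hshort (n + m) hcomb
      have hn0 : n = 0 := by omega
      have hm1 : m = 1 := by omega
      rw [hn0] at hp2
      have hv1 : w₁ = v.val := gpath_zero hp2
      have := hma (by rw [ha, ← hv1])
      omega
    · have : GPath G w₂ w₂ m := by rw [ha] at hp1; exact hp1
      have := gpath_acyclic this; omega

/-- The contracted causal-net. -/
noncomputable def contractNet : CausalNet where
  V := cV G w₂
  E := cE G w₁ w₂
  src e := cproj hne (G.src e.1)
  tgt e := cproj hne (G.tgt e.1)
  fintypeV := Fintype.ofFinite _
  fintypeE := Fintype.ofFinite _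
  acyclic := contract_acyclic hne hedge hshort

/-- A path of length zero between provably equal vertices. -/
def nilCast {X : Type} [Quiver X] {a b : X} (h : a = b) : Quiver.Path a b := by
  subst h; exact .nil

theorem nilCast_length {X : Type} [Quiver X] {a b : X} (h : a = b) :
    (nilCast h).length = 0 := by subst h; rfl

theorem pathEdges_nilCast {K : CausalNet} {a b : K.V} (h : a = b) :
    pathEdges (nilCast h) = [] := by subst h; simp [nilCast, pathEdges]

/-- The contraction prefunctor. -/
noncomputable def contractPre : G.V ⥤q Paths (contractNet hne hedge hshort).V where
  obj v := cproj hne v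
  map {x y} f :=
    letI := Classical.dec (Removed G w₁ w₂ f.1)
    letI : Quiver (cV G w₂) := CausalNet.quiver (contractNet hne hedge hshort)
    if h : Removed G w₁ w₂ f.1 then
      nilCast (show cproj hne x = cproj hne y by
        have hx : x = w₁ := by rw [← f.2.1, h.1]
        have hy : y = w₂ := by rw [← f.2.2, h.2]
        rw [hx, hy, cproj_w₂, cproj_of_ne hne hne])
    else Quiver.Hom.toPath
      (⟨⟨f.1, h⟩, by
          show cproj hne (G.src f.1) = cproj hne x
          rw [f.2.1], by
          show cproj hne (G.tgt f.1) = cproj hne y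
          rw [f.2.2]⟩ :
        (cproj hne x : cV G w₂) ⟶ cproj hne y)

/-- The contraction morphism. -/
noncomputable def contractMor : G ⟶ contractNet hne hedge hshort :=
  Paths.lift (contractPre hne hedge hshort)

theorem contract_vmap (v : G.V) : vmap (contractMor hne hedge hshort) v = cproj hne v := rfl

theorem contract_edgePath (e : G.E) :
    edgePath (contractMor hne hedge hshort) e =
      (contractPre hne hedge hshort).map (edgeHom G e) :=
  Paths.lift_toPath _ _

theorem contract_edgePath_removed {e : G.E} (h : Removed G w₁ w₂ e) :
    (edgePath (contractMor hne hedge hshort) e).length = 0 ∧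
      pathEdges (edgePath (contractMor hne hedge hshort) e) = [] := by
  rw [contract_edgePath]
  unfold contractPre edgeHom
  dsimp only
  rw [dif_pos h]
  exact ⟨nilCast_length _, pathEdges_nilCast _⟩

theorem contract_edgePath_kept {e : G.E} (h : ¬ Removed G w₁ w₂ e) :
    (edgePath (contractMor hne hedge hshort) e).length = 1 ∧
      pathEdges (edgePath (contractMor hne hedge hshort) e) = [⟨e, h⟩] := by
  rw [contract_edgePath]
  unfold contractPre edgeHom
  dsimp only
  rw [dif_neg h]
  exact ⟨rfl, by erw [pathEdges, pathEdges]; rfl⟩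

theorem contract_isContractionEdge (e : G.E) :
    IsContractionEdge (contractMor hne hedge hshort) e ↔ Removed G w₁ w₂ e := by
  constructor
  · intro hc
    by_contra hr
    have := (contract_edgePath_kept hne hedge hshort hr).1
    rw [IsContractionEdge, this] at hc
    omega
  · intro hr
    exact (contract_edgePath_removed hne hedge hshort hr).1

theorem contract_mapsToEdge {e : G.E} {h : (contractNet hne hedge hshort).E}
    (hm : MapsToEdge (contractMor hne hedge hshort) e h) :
    ∃ hr : ¬ Removed G w₁ w₂ e, h = ⟨e, hr⟩ := by
  by_cases hr : Removed G w₁ w₂ e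
  · have := (contract_edgePath_removed hne hedge hshort hr).2
    rw [MapsToEdge, this] at hm
    exact absurd hm (by simp)
  · have := (contract_edgePath_kept hne hedge hshort hr).2
    rw [MapsToEdge, this] at hm
    exact ⟨hr, (List.cons_eq_cons.mp hm.symm).1⟩

theorem contract_quotient : IsQuotientMor (contractMor hne hedge hshort) := by
  constructor
  · intro v
    exact ⟨v.val, by rw [contract_vmap]; exact cproj_eta hne v⟩
  · intro h
    refine ⟨h.1, ?_⟩
    show pathEdges (edgePath _ h.1) = [h]
    rw [(contract_edgePath_kept hne hedge hshort h.2).2]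
    rfl

theorem contract_vcg : IsVertexCoarseGraining (contractMor hne hedge hshort) := by
  refine ⟨⟨contract_quotient hne hedge hshort, ?_⟩, ?_⟩
  · intro e hsub
    rw [IsSubdivisionEdge] at hsub
    by_cases h : Removed G w₁ w₂ e
    · rw [(contract_edgePath_removed hne hedge hshort h).1] at hsub; omega
    · rw [(contract_edgePath_kept hne hedge hshort h).1] at hsub; omega
  · intro h e₁ e₂ h1 h2
    obtain ⟨hr1, he1⟩ := contract_mapsToEdge hne hedge hshort h1
    obtain ⟨hr2, he2⟩ := contract_mapsToEdge hne hedge hshort h2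
    have := he1.symm.trans he2
    exact congrArg Subtype.val this

theorem cproj_merge {u u' : G.V} (h : cproj hne u = cproj hne u') :
    u = u' ∨ ((u = w₁ ∨ u = w₂) ∧ (u' = w₁ ∨ u' = w₂)) := by
  by_cases h1 : u = w₂ <;> by_cases h2 : u' = w₂
  · left; rw [h1, h2]
  · rw [h1, cproj_w₂, cproj_of_ne hne h2] at h
    exact Or.inr ⟨Or.inr h1, Or.inl (congrArg Subtype.val h).symm⟩
  · rw [h2, cproj_w₂, cproj_of_ne hne h1] at h
    exact Or.inr ⟨Or.inl (congrArg Subtype.val h), Or.inr h2⟩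
  · rw [cproj_of_ne hne h1, cproj_of_ne hne h2] at h
    exact Or.inl (congrArg Subtype.val h)

theorem contract_fiber_connected (v : (contractNet hne hedge hshort).V) :
    Connected (fiber (contractMor hne hedge hshort) v) := by
  obtain ⟨e₀, he₀1, he₀2⟩ := id hedge
  rw [Connected, SimpleGraph.connected_iff]
  have hchar : ∀ x : (fiber (contractMor hne hedge hshort) v).V,
      (x.val = w₂ ∧ v.val = w₁) ∨ x.val = v.val := by
    intro x
    have hx : cproj hne x.val = v := x.prop
    by_cases h : x.val = w₂
    · rw [h, cproj_w₂] at hx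
      exact Or.inl ⟨h, by rw [← hx]⟩
    · rw [cproj_of_ne hne h] at hx
      exact Or.inr (congrArg Subtype.val hx)
  have hadj : ∀ x y : (fiber (contractMor hne hedge hshort) v).V,
      x.val = w₁ → y.val = w₂ → v.val = w₁ →
      (undirected (fiber (contractMor hne hedge hshort) v)).Adj x y := by
    intro x y hx hy hv
    have hmem : e₀ ∈ {e : G.E | IsContractionEdge (contractMor hne hedge hshort) e ∧
        vmap (contractMor hne hedge hshort) (G.src e) = v} := by
      refine ⟨(contract_isContractionEdge hne hedge hshort e₀).mpr ⟨he₀1, he₀2⟩, ?_⟩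
      show cproj hne (G.src e₀) = v
      rw [he₀1, cproj_of_ne hne hne]
      exact Subtype.ext hv.symm
    refine ⟨?_, ⟨e₀, hmem⟩, Or.inl ⟨?_, ?_⟩⟩
    · intro hxy
      rw [hxy] at hx
      rw [hx] at hy
      exact hne hy
    · exact Subtype.ext (he₀1.trans hx.symm)
    · exact Subtype.ext (he₀2.trans hy.symm)
  constructor
  · intro x y
    by_cases hxy : x.val = y.val
    · rw [Subtype.ext hxy]
    · rcases hchar x with ⟨hx2, hv⟩ | hx1 <;> rcases hchar y with ⟨hy2, hv'⟩ | hy1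
      · exact absurd (hx2.trans hy2.symm) hxy
      · exact ((hadj y x (hy1.trans hv) hx2 hv).reachable).symm
      · exact (hadj x y (hx1.trans hv') hy2 hv').reachable
      · exact absurd (hx1.trans hy1.symm) hxy
  · refine ⟨⟨v.val, ?_⟩⟩
    show cproj hne v.val = v
    exact cproj_eta hne v

theorem contract_isSimpleContraction :
    IsSimpleContraction (contractMor hne hedge hshort) := by
  refine ⟨⟨contract_vcg hne hedge hshort, contract_fiber_connected hne hedge hshort⟩,
    w₁, w₂, hne, ?_, hedge, fun e => contract_isContractionEdge hne hedge hshort e, ?_⟩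
  · show cproj hne w₁ = cproj hne w₂
    rw [cproj_w₂, cproj_of_ne hne hne]
  · intro u u' h
    exact cproj_merge hne h

theorem contract_connected (hG : Connected G) :
    Connected (contractNet hne hedge hshort) := by
  rw [Connected, SimpleGraph.connected_iff]
  refine ⟨?_, ⟨⟨w₁, hne⟩⟩⟩
  have step : ∀ u v' : G.V, (undirected G).Adj u v' →
      (undirected (contractNet hne hedge hshort)).Reachable
        (cproj hne u) (cproj hne v') := by
    rintro u v' ⟨hne', e, he⟩
    by_cases hr : Removed G w₁ w₂ e
    · have : cproj hne u = cproj hne v' := by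
        rcases he with ⟨h1, h2⟩ | ⟨h1, h2⟩ <;>
          rw [← h1, ← h2, hr.1, hr.2, cproj_w₂, cproj_of_ne hne hne]
      rw [this]; exact SimpleGraph.Reachable.refl _
    · by_cases hc : cproj hne u = cproj hne v'
      · rw [hc]; exact SimpleGraph.Reachable.refl _
      · refine SimpleGraph.Adj.reachable ⟨hc, ⟨e, hr⟩, ?_⟩
        rcases he with ⟨h1, h2⟩ | ⟨h1, h2⟩
        · exact Or.inl ⟨by show cproj hne (G.src e) = _; rw [h1],
            by show cproj hne (G.tgt e) = _; rw [h2]⟩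
        · exact Or.inr ⟨by show cproj hne (G.src e) = _; rw [h1],
            by show cproj hne (G.tgt e) = _; rw [h2]⟩
  intro x y
  have main : ∀ {u v' : G.V}, (undirected G).Walk u v' →
      (undirected (contractNet hne hedge hshort)).Reachable
        (cproj hne u) (cproj hne v') := by
    intro u v' w
    induction w with
    | nil => exact SimpleGraph.Reachable.refl _
    | cons h p ih => exact (step _ _ h).trans ih
  obtain ⟨p⟩ := hG.preconnected x.val y.val
  have := main p
  have e1 : cproj hne x.val = x := cproj_eta hne x
  have e2 : cproj hne y.val = y := cproj_eta hne y
  rwa [e1, e2] at this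

theorem contract_card :
    Fintype.card (contractNet hne hedge hshort).V < Fintype.card G.V := by
  refine Fintype.card_lt_of_injective_of_notMem Subtype.val Subtype.val_injective
    (b := w₂) ?_
  rintro ⟨⟨x, hx⟩, hh⟩
  exact hx hh

end Contract

theorem point_connected {A : CausalNet} (h : IsPoint A) : Connected A := by
  obtain ⟨⟨v, hv⟩, -⟩ := h
  rw [Connected, SimpleGraph.connected_iff]
  refine ⟨fun x y => ?_, ⟨v⟩⟩
  rw [hv x, hv y]

theorem step_connected {A B : CausalNet} (h : SimpleContractionStep A B)
    (hB : Connected B) : Connected A := by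
  obtain ⟨φ, hcm, w₁, w₂, hne, hvv, ⟨e₀, he₀1, he₀2⟩, hiff, hmerge⟩ := h
  have hquot : IsQuotientMor φ := hcm.1.1.1
  have hadj12 : (undirected A).Adj w₁ w₂ := ⟨hne, e₀, Or.inl ⟨he₀1, he₀2⟩⟩
  have hsame : ∀ u u' : A.V, vmap φ u = vmap φ u' → (undirected A).Reachable u u' := by
    intro u u' hu
    rcases hmerge u u' hu with rfl | ⟨hu1, hu2⟩
    · exact SimpleGraph.Reachable.refl _
    · rcases hu1 with rfl | rfl <;> rcases hu2 with rfl | rfl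
      · exact SimpleGraph.Reachable.refl _
      · exact hadj12.reachable
      · exact hadj12.reachable.symm
      · exact SimpleGraph.Reachable.refl _
  have main : ∀ {x y : B.V}, (undirected B).Walk x y → ∀ u v : A.V,
      vmap φ u = x → vmap φ v = y → (undirected A).Reachable u v := by
    intro x y w
    induction w with
    | nil =>
        intro u v hu hv
        exact hsame u v (hu.trans hv.symm)
    | @cons x c y hadj w ih =>
        intro u v hu hv
        obtain ⟨hxc, hh, hor⟩ := hadj
        obtain ⟨e, he⟩ := hquot.2 hh
        obtain ⟨hsrc, htgt⟩ := mapsToEdge_endpoints he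
        have hAe : (undirected A).Adj (A.src e) (A.tgt e) :=
          ⟨edge_ne e, e, Or.inl ⟨rfl, rfl⟩⟩
        rcases hor with ⟨h1, h2⟩ | ⟨h1, h2⟩
        · have r1 := hsame u (A.src e) (by rw [hu, ← h1, hsrc])
          have r3 := ih (A.tgt e) v (by rw [← htgt, h2]) hv
          exact (r1.trans hAe.reachable).trans r3
        · have r1 := hsame u (A.tgt e) (by rw [hu, ← h2, htgt])
          have r3 := ih (A.src e) v (by rw [← hsrc, h1]) hv
          exact (r1.trans hAe.reachable.symm).trans r3
  rw [Connected, SimpleGraph.connected_iff]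
  refine ⟨fun u v => ?_, ⟨w₁⟩⟩
  obtain ⟨w⟩ := hB.preconnected (vmap φ u) (vmap φ v)
  exact main w u v rfl rfl

theorem forward_aux : ∀ (n : ℕ) (G : CausalNet), Fintype.card G.V ≤ n → Connected G →
    ∃ H : CausalNet, IsPoint H ∧ Relation.ReflTransGen SimpleContractionStep G H := by
  intro n
  induction n with
  | zero =>
      intro G hcard hconn
      haveI : Nonempty G.V := hconn.nonempty
      have := Fintype.card_pos (α := G.V)
      omega
  | succ n ih =>
      intro G hcard hconn
      by_cases hall : ∀ u v : G.V, u = v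
      · obtain ⟨v⟩ := hconn.nonempty
        refine ⟨G, ⟨⟨v, fun w => hall w v⟩, ⟨fun e => ?_⟩⟩, Relation.ReflTransGen.refl⟩
        have := gpath_acyclic (gpath_edge e rfl (hall (G.tgt e) (G.src e)))
        omega
      · push_neg at hall
        obtain ⟨u0, v0, huv⟩ := hall
        haveI : IsPartialOrder G.V (Reaches G) :=
          { refl := fun a => ⟨.nil⟩
            trans := fun a b c ⟨p⟩ ⟨q⟩ => ⟨p.comp q⟩
            antisymm := fun a b ⟨p⟩ ⟨q⟩ => by
              have h0 := acyclic' G a (p.comp q)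
              rw [Quiver.Path.length_comp] at h0
              exact Quiver.Path.eq_of_length_zero p (by omega) }
        obtain ⟨s, hlin, hsub⟩ := extend_partialOrder (Reaches G)
        classical
        set rank : G.V → ℕ :=
          fun v => (Finset.univ.filter (fun x => s x v ∧ x ≠ v)).card with hrankdef
        haveI : IsLinearOrder G.V s := hlin
        have hrank : ∀ a b : G.V, s a b → a ≠ b → rank a < rank b := by
          intro a b hab hne
          apply Finset.card_lt_card
          constructor
          · intro x hx
            rw [Finset.mem_filter] at hx ⊢
            refine ⟨Finset.mem_univ _, _root_.trans hx.2.1 hab, ?_⟩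
            intro hxb
            rw [hxb] at hx
            exact hne (antisymm hab hx.2.1)
          · intro hsub'
            have ha : a ∈ Finset.univ.filter (fun x => s x b ∧ x ≠ b) :=
              Finset.mem_filter.mpr ⟨Finset.mem_univ _, hab, hne⟩
            have := hsub' ha
            rw [Finset.mem_filter] at this
            exact this.2.2 rfl
        have hreach : ∀ {a b : G.V}, Reaches G a b → a = b ∨ rank a < rank b := by
          intro a b hab
          by_cases h : a = b
          · exact Or.inl h
          · exact Or.inr (hrank a b (hsub a b hab) h)
        have hrankE : ∀ e : G.E, rank (G.src e) < rank (G.tgt e) := by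
          intro e
          rcases hreach ⟨Quiver.Hom.toPath ⟨e, rfl, rfl⟩⟩ with h | h
          · exact absurd h (edge_ne e)
          · exact h
        have hrankP : ∀ {a b : G.V} (p : Quiver.Path a b), 1 ≤ p.length →
            rank a < rank b := by
          intro a b p hp
          rcases hreach ⟨p⟩ with h | h
          · subst h
            have := acyclic' G a p
            omega
          · exact h
        obtain ⟨e1⟩ : Nonempty G.E := by
          obtain ⟨w⟩ := hconn.preconnected u0 v0
          cases w with
          | nil => exact absurd rfl huv
          | cons h _ => exact ⟨h.2.choose⟩
        obtain ⟨e, -, hemin⟩ := Finset.exists_min_image Finset.univ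
          (fun e => rank (G.tgt e) - rank (G.src e)) ⟨e1, Finset.mem_univ _⟩
        have hne : G.src e ≠ G.tgt e := edge_ne e
        have hedge : ∃ e' : G.E, G.src e' = G.src e ∧ G.tgt e' = G.tgt e := ⟨e, rfl, rfl⟩
        have hshort : ∀ m : ℕ, GPath G (G.src e) (G.tgt e) m → m ≤ 1 := by
          have key : ∀ (b : G.V) (p : Quiver.Path (G.src e) b), b = G.tgt e →
              p.length ≤ 1 := by
            intro b p
            cases p with
            | nil => intro _; simp
            | @cons c d q f =>
                intro hb
                rw [Quiver.Path.length_cons]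
                by_contra h2
                have hq1 : 1 ≤ q.length := by omega
                have h1 := hrankP q hq1
                have h3 := hrankE f.1
                rw [f.2.1, f.2.2] at h3
                have h4 := hemin f.1 (Finset.mem_univ _)
                rw [f.2.1, f.2.2] at h4
                rw [hb] at h3 h4
                omega
          rintro m ⟨p, hp⟩
          have := key _ p rfl
          omega
        obtain ⟨P, hP, hchain⟩ := ih (contractNet hne hedge hshort)
          (by have := contract_card hne hedge hshort; omega)
          (contract_connected hne hedge hshort hconn)
        exact ⟨P, hP, Relation.ReflTransGen.head
          ⟨contractMor hne hedge hshort, contract_isSimpleContraction hne hedge hshort⟩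
          hchain⟩

theorem connected_iff_contractible_to_point (G : CausalNet) :
    Connected G ↔
      ∃ H : CausalNet, IsPoint H ∧ Relation.ReflTransGen SimpleContractionStep G H := by
  constructor
  · intro h
    exact forward_aux (Fintype.card G.V) G le_rfl h
  · rintro ⟨H, hH, hchain⟩
    induction hchain using Relation.ReflTransGen.head_induction_on with
    | refl => exact point_connected hH
    | head hstep _ ih => exact step_connected hstep ih

end CausalNets
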